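/- Let p be a prime and G a finite group of characteristic p, i.e. C_G(O_p(G)) ≤ O_p(G). Then for every nontrivial p-subgroup P of G, the normalizer N_G(P) is again of characteristic p. -/

import Mathlib

/-- `P` is the largest normal `p`-subgroup `O_p(G)` of `G`. -/
def IsPCore (p : ℕ) {G : Type*} [Group G] (P : Subgroup G) : Prop :=
  P.Normal ∧ IsPGroup p ↥P ∧ ∀ Q : Subgroup G, Q.Normal → IsPGroup p ↥Q → Q ≤ P

namespace ThompsonAux
open Subgroup
open scoped commutatorElement
variable {G : Type*} [Group G]

def conjAut {Q : Subgroup G} {a : G} (ha : a ∈ (Subgroup.normalizer ((Q : Subgroup G) : Set G))) : ↥Q ≃* ↥Q where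
  toFun x := ⟨a * ↑x * a⁻¹, (Subgroup.mem_normalizer_iff.mp ha ↑x).mp x.2⟩
  invFun x := ⟨a⁻¹ * ↑x * a, by
    have h := (Subgroup.mem_normalizer_iff.mp ((Subgroup.normalizer ((Q : Subgroup G) : Set G)).inv_mem ha) (↑x)).mp x.2
    simpa using h⟩
  left_inv x := by
    apply Subtype.ext
    show a⁻¹ * (a * ↑x * a⁻¹) * a = ↑x
    group
  right_inv x := by
    apply Subtype.ext
    show a * (a⁻¹ * ↑x * a) * a⁻¹ = ↑x
    group
  map_mul' x y := by
    apply Subtype.ext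
    show a * (↑x * ↑y) * a⁻¹ = (a * ↑x * a⁻¹) * (a * ↑y * a⁻¹)
    group

@[simp] theorem coe_conjAut {Q : Subgroup G} {a : G} (ha : a ∈ (Subgroup.normalizer ((Q : Subgroup G) : Set G))) (x : ↥Q) :
    ((conjAut ha x : ↥Q) : G) = a * ↑x * a⁻¹ := rfl

@[simp] theorem coe_conjAut_symm {Q : Subgroup G} {a : G} (ha : a ∈ (Subgroup.normalizer ((Q : Subgroup G) : Set G))) (x : ↥Q) :
    (((conjAut ha).symm x : ↥Q) : G) = a⁻¹ * ↑x * a := rfl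

theorem abel_of_surjective {H : Type*} [Group H] :
    Function.Surjective (Abelianization.of : H →* Abelianization H) := by
  intro v
  exact QuotientGroup.mk_surjective v

theorem conjMap_eq {Q : Subgroup G} {a : G} (ha : a ∈ (Subgroup.normalizer ((Q : Subgroup G) : Set G))) :
    Q.map (MulAut.conj a).toMonoidHom = Q := by
  rw [Subgroup.mem_normalizer_iff] at ha
  ext y
  simp only [Subgroup.mem_map, MulEquiv.coe_toMonoidHom, MulAut.conj_apply]
  constructor
  · rintro ⟨x, hx, rfl⟩
    exact (ha x).mp hx
  · intro hy
    refine ⟨a⁻¹ * y * a, ?_, by group⟩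
    apply (ha (a⁻¹ * y * a)).mpr
    have : a * (a⁻¹ * y * a) * a⁻¹ = y := by group
    rwa [this]

theorem mem_normalizer_of_conj {K : Subgroup G} {a : G}
    (h : ∀ x ∈ K, a * x * a⁻¹ ∈ K) (h' : ∀ x ∈ K, a⁻¹ * x * a ∈ K) :
    a ∈ (Subgroup.normalizer ((K : Subgroup G) : Set G)) := by
  rw [Subgroup.mem_normalizer_iff]
  intro x
  refine ⟨fun hx => h x hx, fun hx => ?_⟩
  have h2 := h' _ hx
  have : a⁻¹ * (a * x * a⁻¹) * a = x := by group
  rwa [this] at h2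

theorem mem_zpowers_nat {g y : G} [Finite G] (hy : y ∈ Subgroup.zpowers g) :
    ∃ n : ℕ, y = g ^ n := by
  obtain ⟨k, rfl⟩ := Subgroup.mem_zpowers_iff.mp hy
  have ho : 0 < orderOf g := (isOfFinOrder_of_finite g).orderOf_pos
  refine ⟨(k % (orderOf g : ℤ)).toNat, ?_⟩
  rw [← zpow_natCast, Int.toNat_of_nonneg (Int.emod_nonneg _ (by exact_mod_cast ho.ne'))]
  conv_lhs => rw [← Int.emod_add_mul_ediv k (orderOf g : ℤ)]
  rw [zpow_add, zpow_mul]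
  simp [zpow_natCast, pow_orderOf_eq_one]

theorem commutator_ne_top_of_pgroup {H : Type*} [Group H] [Finite H] [Nontrivial H]
    {p : ℕ} [Fact p.Prime] (h : IsPGroup p H) : _root_.commutator H ≠ ⊤ := by
  intro htop
  have hnil : Group.IsNilpotent H := h.isNilpotent
  obtain ⟨n, hn⟩ := _root_.nilpotent_iff_lowerCentralSeries.mp hnil
  have hall : ∀ m : ℕ, (⊤ : Subgroup H).lowerCentralSeries m = ⊤ := by
    intro m
    induction m with
    | zero => exact Subgroup.lowerCentralSeries_zero _
    | succ m ih =>
      rw [Subgroup.lowerCentralSeries_succ, ih]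
      exact htop
  rw [hall n] at hn
  obtain ⟨x, hx⟩ := exists_ne (1 : H)
  have hxt : x ∈ (⊤ : Subgroup H) := trivial
  rw [hn] at hxt
  exact hx (Subgroup.mem_bot.mp hxt)

/-- Case 2 of the proof of Thompson's P×Q lemma: `⁅Q, ⟨g⟩⁆ = Q`. -/
theorem thompson_case2 [Finite G] {p : ℕ} [Fact p.Prime]
    (Q P : Subgroup G) (hQ : IsPGroup p Q) (hP : IsPGroup p P)
    (hPN : P ≤ (Subgroup.normalizer ((Q : Subgroup G) : Set G))) (g : G) (hg : g ∈ (Subgroup.normalizer ((Q : Subgroup G) : Set G)))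
    (hgP : ∀ a ∈ P, Commute g a)
    (hfix : ∀ q ∈ Q, (∀ a ∈ P, Commute a q) → Commute g q)
    (hbot : Q ≠ ⊥) (hQ1 : ⁅Q, Subgroup.zpowers g⁆ = Q)
    (IH : ∀ W : Subgroup G, W < Q → P ≤ (Subgroup.normalizer ((W : Subgroup G) : Set G)) → g ∈ (Subgroup.normalizer ((W : Subgroup G) : Set G)) →
      ∀ x ∈ W, Commute g x) :
    ∀ q ∈ Q, Commute g q := by
  classical
  haveI hnt : Nontrivial ↥Q := Q.nontrivial_iff_ne_bot.mpr hbot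
  -- the commutator subgroup Q' = [Q,Q]
  have hQ'le : ⁅Q, Q⁆ ≤ Q := by
    rw [Subgroup.commutator_le]
    intro x hx y hy
    rw [commutatorElement_def]
    exact Q.mul_mem (Q.mul_mem (Q.mul_mem hx hy) (Q.inv_mem hx)) (Q.inv_mem hy)
  have hQ'map : ⁅Q, Q⁆ = Subgroup.map Q.subtype (_root_.commutator ↥Q) := by
    rw [_root_.commutator_def, Subgroup.map_commutator]
    congr 1 <;> rw [← MonoidHom.range_eq_map, Q.range_subtype]
  have hQ'lt : ⁅Q, Q⁆ < Q := by
    rcases lt_or_eq_of_le hQ'le with h | h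
    · exact h
    · exfalso
      apply commutator_ne_top_of_pgroup hQ
      have h2 : Subgroup.map Q.subtype (_root_.commutator ↥Q) = Subgroup.map Q.subtype ⊤ := by
        rw [← hQ'map, h, ← MonoidHom.range_eq_map, Q.range_subtype]
      exact Subgroup.map_injective Q.subtype_injective h2
  -- normalizer facts for Q'
  have hconjQ' : ∀ c : G, c ∈ (Subgroup.normalizer ((Q : Subgroup G) : Set G)) → ∀ x ∈ ⁅Q, Q⁆, c * x * c⁻¹ ∈ ⁅Q, Q⁆ := by
    intro c hc x hx
    have h1 : c * x * c⁻¹ ∈ (⁅Q, Q⁆.map (MulAut.conj c).toMonoidHom) :=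
      Subgroup.mem_map.mpr ⟨x, hx, by simp [MulAut.conj_apply]⟩
    rwa [Subgroup.map_commutator, conjMap_eq hc] at h1
  have hPNQ' : P ≤ (Subgroup.normalizer ((⁅Q, Q⁆ : Subgroup G) : Set G)) := by
    intro a ha
    exact mem_normalizer_of_conj (hconjQ' a (hPN ha))
      (by
        intro x hx
        have := hconjQ' a⁻¹ ((Subgroup.normalizer ((Q : Subgroup G) : Set G)).inv_mem (hPN ha)) x hx
        simpa using this)
  have hgNQ' : g ∈ (Subgroup.normalizer ((⁅Q, Q⁆ : Subgroup G) : Set G)) :=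
    mem_normalizer_of_conj (hconjQ' g hg)
      (by
        intro x hx
        have := hconjQ' g⁻¹ ((Subgroup.normalizer ((Q : Subgroup G) : Set G)).inv_mem hg) x hx
        simpa using this)
  have hgQ' : ∀ u ∈ ⁅Q, Q⁆, Commute g u := IH ⁅Q, Q⁆ hQ'lt hPNQ' hgNQ'
  -- three subgroups: Q' is centralized by Q
  have hcent : ∀ x ∈ Q, ∀ u ∈ ⁅Q, Q⁆, Commute x u := by
    have hYQ' : ⁅Subgroup.zpowers g, ⁅Q, Q⁆⁆ = ⊥ := by
      rw [eq_bot_iff, Subgroup.commutator_le]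
      intro y hy u hu
      obtain ⟨m, rfl⟩ := mem_zpowers_nat hy
      rw [Subgroup.mem_bot, commutatorElement_eq_one_iff_commute]
      exact ((hgQ' u hu).pow_left m)
    have h1 : ⁅⁅Subgroup.zpowers g, ⁅Q, Q⁆⁆, Q⁆ = ⊥ := by
      rw [hYQ', Subgroup.commutator_bot_left]
    have h2 : ⁅⁅⁅Q, Q⁆, Q⁆, Subgroup.zpowers g⁆ = ⊥ := by
      have hle : ⁅⁅Q, Q⁆, Q⁆ ≤ ⁅Q, Q⁆ := by
        rw [Subgroup.commutator_le]
        intro u hu x hx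
        have h3 : u * (x * u⁻¹ * x⁻¹) ∈ ⁅Q, Q⁆ := by
          apply Subgroup.mul_mem _ hu
          have := hconjQ' x (Subgroup.le_normalizer hx) u⁻¹ (Subgroup.inv_mem _ hu)
          exact this
        have h4 : ⁅u, x⁆ = u * (x * u⁻¹ * x⁻¹) := by rw [commutatorElement_def]; group
        rw [h4]; exact h3
      have h5 : ⁅⁅⁅Q,Q⁆, Q⁆, Subgroup.zpowers g⁆ ≤ ⁅⁅Q,Q⁆, Subgroup.zpowers g⁆ :=
        Subgroup.commutator_mono hle le_rfl
      have h6 : ⁅⁅Q,Q⁆, Subgroup.zpowers g⁆ = ⊥ := by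
        rw [Subgroup.commutator_comm]; exact hYQ'
      rw [← le_bot_iff]; rw [h6] at h5; exact h5
    have h7 := Subgroup.commutator_commutator_eq_bot_of_rotate h1 h2
    rw [hQ1] at h7
    intro x hx u hu
    have := Subgroup.commutator_le.mp (le_of_eq h7) x hx u hu
    rw [Subgroup.mem_bot, commutatorElement_eq_one_iff_commute] at this
    exact this
  -- abelianization machinery
  let π : ↥Q →* Abelianization ↥Q := Abelianization.of
  have hπs : Function.Surjective π := abel_of_surjective
  let Φ : ↥Q ≃* ↥Q := conjAut hg
  let φA : Abelianization ↥Q →* Abelianization ↥Q := Abelianization.map Φ.toMonoidHom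
  let φA' : Abelianization ↥Q →* Abelianization ↥Q := Abelianization.map Φ.symm.toMonoidHom
  have hφA : ∀ x : ↥Q, φA (π x) = π (Φ x) := fun x => Abelianization.map_of _ _
  have hφA' : ∀ x : ↥Q, φA' (π x) = π (Φ.symm x) := fun x => Abelianization.map_of _ _
  have hΦpow : ∀ (m : ℕ) (x : ↥Q), (((Φ ^ m) x : ↥Q) : G) = g ^ m * ↑x * (g ^ m)⁻¹ := by
    intro m
    induction m with
    | zero => intro x; simp
    | succ m ih =>
      intro x
      have h1 : (Φ ^ (m+1)) x = Φ ((Φ ^ m) x) := by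
        rw [pow_succ']; rfl
      rw [h1]
      have h2 : ((Φ ((Φ ^ m) x) : ↥Q) : G) = g * ↑((Φ ^ m) x) * g⁻¹ := rfl
      rw [h2, ih x, pow_succ']
      group
  -- the map v ↦ φA v * v⁻¹ on the abelianization
  let dA : Abelianization ↥Q →* Abelianization ↥Q :=
    MonoidHom.mk' (fun v => φA v * v⁻¹) (by
      intro v w
      show φA (v * w) * (v * w)⁻¹ = (φA v * v⁻¹) * (φA w * w⁻¹)
      rw [map_mul, mul_inv]
      exact mul_mul_mul_comm _ _ _ _)
  have hdA : ∀ v, dA v = φA v * v⁻¹ := fun v => rfl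
  have hdrange : ∀ (m : ℕ) (x : ↥Q), π ((Φ ^ m) x) * (π x)⁻¹ ∈ dA.range := by
    intro m
    induction m with
    | zero =>
      intro x
      have h0 : (Φ ^ 0) x = x := by simp
      rw [h0, mul_inv_cancel]
      exact Subgroup.one_mem _
    | succ m ih =>
      intro x
      have h1 : (Φ ^ (m+1)) x = Φ ((Φ ^ m) x) := by rw [pow_succ']; rfl
      have h2 : π ((Φ ^ (m+1)) x) * (π x)⁻¹ =
          (π (Φ ((Φ ^ m) x)) * (π ((Φ ^ m) x))⁻¹) * (π ((Φ ^ m) x) * (π x)⁻¹) := by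
        rw [h1]; group
      rw [h2]
      apply Subgroup.mul_mem
      · have h3 : π (Φ ((Φ ^ m) x)) * (π ((Φ ^ m) x))⁻¹ = dA (π ((Φ ^ m) x)) := by
          rw [hdA, hφA]
        rw [h3]
        exact ⟨_, rfl⟩
      · exact ih x
  have hrt : dA.range = ⊤ := by
    rw [eq_top_iff]
    intro v _
    obtain ⟨x, rfl⟩ := hπs v
    have hx : (↑x : G) ∈ ⁅Q, Subgroup.zpowers g⁆ := by rw [hQ1]; exact x.2
    have hB : ⁅Q, Subgroup.zpowers g⁆ ≤ Subgroup.map Q.subtype (dA.range.comap π) := by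
      rw [Subgroup.commutator_le]
      intro x1 hx1 y hy
      obtain ⟨m, rfl⟩ := mem_zpowers_nat hy
      refine ⟨(⟨x1, hx1⟩ : ↥Q) * ((Φ ^ m) ⟨x1, hx1⟩)⁻¹, ?_, ?_⟩
      · show π _ ∈ dA.range
        rw [map_mul, map_inv]
        have h4 := Subgroup.inv_mem _ (hdrange m ⟨x1, hx1⟩)
        rw [mul_inv, inv_inv] at h4
        rw [mul_comm]
        exact h4
      · show ((⟨x1, hx1⟩ : ↥Q) : G) * (↑(((Φ ^ m) ⟨x1, hx1⟩)⁻¹ : ↥Q) : G) = ⁅x1, g ^ m⁆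
        rw [show (↑(((Φ ^ m) ⟨x1, hx1⟩)⁻¹ : ↥Q) : G) = (↑(((Φ ^ m) ⟨x1, hx1⟩) : ↥Q) : G)⁻¹ from rfl]
        rw [hΦpow m ⟨x1, hx1⟩]
        rw [commutatorElement_def]
        group
    obtain ⟨x', hx', hxx⟩ := hB hx
    have hxeq : x' = x := Subtype.ext hxx
    rw [hxeq] at hx'
    exact hx'
  have hfixφ : ∀ v, φA v = v → v = 1 := by
    have hc1 : Nat.card (Abelianization ↥Q) =
        Nat.card (Abelianization ↥Q ⧸ dA.ker) * Nat.card dA.ker :=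
      Subgroup.card_eq_card_quotient_mul_card_subgroup _
    have hc2 : Nat.card (Abelianization ↥Q ⧸ dA.ker) = Nat.card dA.range :=
      Nat.card_congr (QuotientGroup.quotientKerEquivRange dA).toEquiv
    have hc3 : Nat.card dA.range = Nat.card (Abelianization ↥Q) := by
      rw [hrt]
      exact Nat.card_congr Subgroup.topEquiv.toEquiv
    have hpos : 0 < Nat.card (Abelianization ↥Q) := Nat.card_pos
    have hker1 : Nat.card dA.ker = 1 := by
      rw [hc2, hc3] at hc1
      have := hc1.symm
      nth_rewrite 2 [show Nat.card (Abelianization ↥Q) =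
        Nat.card (Abelianization ↥Q) * 1 from (mul_one _).symm] at this
      exact (Nat.eq_of_mul_eq_mul_left hpos this)
    have hkerbot : dA.ker = ⊥ := Subgroup.card_eq_one.mp hker1
    intro v hv
    have hvk : v ∈ dA.ker := by
      rw [MonoidHom.mem_ker, hdA, hv, mul_inv_cancel]
    rw [hkerbot, Subgroup.mem_bot] at hvk
    exact hvk
  -- the action of P on the abelianization
  let ψ : (a : ↥P) → (↥Q ≃* ↥Q) := fun a => conjAut (hPN a.2)
  let ψA : ↥P → (Abelianization ↥Q →* Abelianization ↥Q) :=
    fun a => Abelianization.map (ψ a).toMonoidHom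
  have hψA : ∀ (a : ↥P) (x : ↥Q), ψA a (π x) = π (ψ a x) := fun a x => Abelianization.map_of _ _
  have hψψ : ∀ (a b : ↥P) (x : ↥Q), ψ a (ψ b x) = ψ (a * b) x := by
    intro a b x
    apply Subtype.ext
    show (↑a : G) * ((↑b : G) * ↑x * (↑b : G)⁻¹) * (↑a : G)⁻¹ =
      ((↑a : G) * ↑b) * ↑x * ((↑a : G) * ↑b)⁻¹
    group
  have hψ1 : ∀ x : ↥Q, ψ 1 x = x := by
    intro x
    apply Subtype.ext
    show ((1 : ↥P) : G) * ↑x * ((1 : ↥P) : G)⁻¹ = ↑x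
    simp
  let χ : ↥P →* Equiv.Perm (Abelianization ↥Q) :=
    { toFun := fun a =>
        { toFun := ψA a
          invFun := ψA a⁻¹
          left_inv := by
            intro v
            obtain ⟨x, rfl⟩ := hπs v
            rw [hψA, hψA, hψψ, inv_mul_cancel, hψ1]
          right_inv := by
            intro v
            obtain ⟨x, rfl⟩ := hπs v
            rw [hψA, hψA, hψψ, mul_inv_cancel, hψ1] }
      map_one' := by
        ext v
        obtain ⟨x, rfl⟩ := hπs v
        show ψA 1 (π x) = π x
        rw [hψA, hψ1]
      map_mul' := by
        intro a b
        ext v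
        obtain ⟨x, rfl⟩ := hπs v
        show ψA (a * b) (π x) = ψA a (ψA b (π x))
        rw [hψA, hψA, hψA, hψψ] }
  letI actP : MulAction ↥P (Abelianization ↥Q) := MulAction.compHom _ χ
  have hsmul : ∀ (a : ↥P) (v : Abelianization ↥Q), a • v = ψA a v := fun a v => rfl
  have hApg : IsPGroup p (Abelianization ↥Q) := hQ.of_surjective π hπs
  haveI hAnt : Nontrivial (Abelianization ↥Q) := by
    by_contra hcon
    rw [not_nontrivial_iff_subsingleton] at hcon
    haveI := hcon
    apply commutator_ne_top_of_pgroup hQ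
    rw [eq_top_iff]
    intro x _
    have h1 : (π x) = 1 := Subsingleton.elim _ _
    exact (QuotientGroup.eq_one_iff x).mp h1
  have hpdvd : p ∣ Nat.card (Abelianization ↥Q) := by
    obtain ⟨w, hw⟩ := exists_ne (1 : Abelianization ↥Q)
    obtain ⟨k, hk⟩ := IsPGroup.iff_orderOf.mp hApg w
    have hk0 : k ≠ 0 := by
      intro h; rw [h, pow_zero] at hk; exact hw (orderOf_eq_one_iff.mp hk)
    have h2 : p ∣ orderOf w := hk ▸ dvd_pow_self p hk0
    exact h2.trans (orderOf_dvd_natCard w)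
  have hmod := hP.card_modEq_card_fixedPoints (Abelianization ↥Q)
  have hfixex : ∃ v : Abelianization ↥Q, (∀ a : ↥P, ψA a v = v) ∧ v ≠ 1 := by
    by_contra hcon
    push_neg at hcon
    have hsub : MulAction.fixedPoints ↥P (Abelianization ↥Q) = {1} := by
      ext w
      simp only [MulAction.mem_fixedPoints, Set.mem_singleton_iff]
      constructor
      · intro h
        exact hcon w (fun a => by rw [← hsmul]; exact h a)
      · intro h
        subst h
        intro a
        rw [hsmul]
        exact map_one (ψA a)
    have hcard1 : Nat.card (MulAction.fixedPoints ↥P (Abelianization ↥Q)) = 1 := by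
      rw [hsub]; simp
    rw [hcard1] at hmod
    have h0 : Nat.card (Abelianization ↥Q) % p = 0 := Nat.mod_eq_zero_of_dvd hpdvd
    have h1 : 1 % p = 1 := Nat.mod_eq_of_lt (Fact.out : p.Prime).one_lt
    unfold Nat.ModEq at hmod
    omega
  obtain ⟨v, hvfix, hv1⟩ := hfixex
  -- the subgroup W of P-fixed classes
  let FixA : Subgroup (Abelianization ↥Q) :=
    { carrier := {w | ∀ a : ↥P, ψA a w = w}
      one_mem' := fun a => map_one _
      mul_mem' := by
        intro w1 w2 h1 h2 a
        rw [map_mul, h1 a, h2 a]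
      inv_mem' := by
        intro w h a
        rw [map_inv, h a] }
  let W : Subgroup G := Subgroup.map Q.subtype (FixA.comap π)
  have hWle : W ≤ Q := by
    rintro x ⟨x', _, rfl⟩
    exact x'.2
  have hWmem : ∀ x : ↥Q, ((↑x : G) ∈ W ↔ ∀ a : ↥P, ψA a (π x) = π x) := by
    intro x
    constructor
    · rintro ⟨x', hx', hxx⟩
      have hxe : x' = x := Subtype.ext hxx
      subst hxe
      exact hx'
    · intro h
      exact ⟨x, h, rfl⟩
  have hcommΦψ : ∀ (a : ↥P) (x : ↥Q), ψ a (Φ x) = Φ (ψ a x) := by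
    intro a x
    apply Subtype.ext
    show (↑a : G) * (g * ↑x * g⁻¹) * (↑a : G)⁻¹ = g * ((↑a : G) * ↑x * (↑a : G)⁻¹) * g⁻¹
    have hc := (hgP (↑a) a.2).eq
    rw [show (↑a : G) * (g * ↑x * g⁻¹) * (↑a : G)⁻¹ = ((↑a : G) * g) * ↑x * ((↑a : G) * g)⁻¹
        by group,
      show g * ((↑a : G) * ↑x * (↑a : G)⁻¹) * g⁻¹ = (g * (↑a : G)) * ↑x * (g * (↑a : G))⁻¹
        by group, hc]
  have hcommΦψ' : ∀ (a : ↥P) (x : ↥Q), ψ a (Φ.symm x) = Φ.symm (ψ a x) := by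
    intro a x
    have h1 := hcommΦψ a (Φ.symm x)
    rw [MulEquiv.apply_symm_apply] at h1
    rw [h1, MulEquiv.symm_apply_apply]
  have hWP : P ≤ (Subgroup.normalizer ((W : Subgroup G) : Set G)) := by
    intro a0 ha0
    apply mem_normalizer_of_conj
    · rintro x ⟨x', hx', rfl⟩
      have hπeq : π (ψ (⟨a0, ha0⟩ : ↥P) x') = π x' := by
        rw [← hψA]
        exact hx' ⟨a0, ha0⟩
      rw [show a0 * (Q.subtype x') * a0⁻¹ = ((ψ (⟨a0, ha0⟩ : ↥P) x' : ↥Q) : G) from rfl]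
      apply (hWmem _).mpr
      intro b
      rw [hπeq]
      exact hx' b
    · rintro x ⟨x', hx', rfl⟩
      have hπeq : π (ψ (⟨a0⁻¹, P.inv_mem ha0⟩ : ↥P) x') = π x' := by
        rw [← hψA]
        exact hx' ⟨a0⁻¹, P.inv_mem ha0⟩
      rw [show a0⁻¹ * (Q.subtype x') * a0 = ((ψ (⟨a0⁻¹, P.inv_mem ha0⟩ : ↥P) x' : ↥Q) : G) by
        show _ = a0⁻¹ * ↑x' * (a0⁻¹)⁻¹
        rw [inv_inv]
        rfl]
      apply (hWmem _).mpr
      intro b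
      rw [hπeq]
      exact hx' b
  have hWg : g ∈ (Subgroup.normalizer ((W : Subgroup G) : Set G)) := by
    apply mem_normalizer_of_conj
    · rintro x ⟨x', hx', rfl⟩
      rw [show g * (Q.subtype x') * g⁻¹ = ((Φ x' : ↥Q) : G) from rfl]
      apply (hWmem _).mpr
      intro b
      rw [← hφA]
      have h1 : ψA b (φA (π x')) = φA (ψA b (π x')) := by
        rw [hφA, hψA, hcommΦψ, ← hφA, ← hψA]
      rw [h1, hx' b]
    · rintro x ⟨x', hx', rfl⟩
      rw [show g⁻¹ * (Q.subtype x') * g = ((Φ.symm x' : ↥Q) : G) from rfl]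
      apply (hWmem _).mpr
      intro b
      rw [← hφA']
      have h1 : ψA b (φA' (π x')) = φA' (ψA b (π x')) := by
        rw [hφA', hψA, hcommΦψ', ← hφA', ← hψA]
      rw [h1, hx' b]
  rcases lt_or_eq_of_le hWle with hWlt | hWQ
  · exfalso
    have hgW := IH W hWlt hWP hWg
    obtain ⟨x₀, rfl⟩ := hπs v
    have hx₀ : (↑x₀ : G) ∈ W := (hWmem x₀).mpr hvfix
    have hc := (hgW _ hx₀).eq
    have hΦx₀ : Φ x₀ = x₀ := by
      apply Subtype.ext
      show g * ↑x₀ * g⁻¹ = (↑x₀ : G)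
      rw [hc]
      group
    apply hv1
    apply hfixφ
    rw [hφA, hΦx₀]
  · -- W = Q : conclude via the homomorphism x ↦ ⁅x, a⁆
    have hallfix : ∀ (x : ↥Q) (a : ↥P), ψA a (π x) = π x := by
      intro x a
      have hxW : (↑x : G) ∈ W := by rw [hWQ]; exact x.2
      exact (hWmem x).mp hxW a
    intro q hq
    apply hfix q hq
    intro a0 ha0
    have hcm : ∀ x : ↥Q, ⁅(↑x : G), a0⁆ ∈ ⁅Q, Q⁆ := by
      intro x
      have h0 : π (x * (ψ (⟨a0, ha0⟩ : ↥P) x)⁻¹) = 1 := by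
        rw [map_mul, map_inv, ← hψA, hallfix x ⟨a0, ha0⟩, mul_inv_cancel]
      have h1 : (x * (ψ (⟨a0, ha0⟩ : ↥P) x)⁻¹ : ↥Q) ∈ _root_.commutator ↥Q :=
        (QuotientGroup.eq_one_iff _).mp h0
      have h2 : ((x * (ψ (⟨a0, ha0⟩ : ↥P) x)⁻¹ : ↥Q) : G) ∈ ⁅Q, Q⁆ := by
        rw [hQ'map]
        exact ⟨_, h1, rfl⟩
      have h3 : ((x * (ψ (⟨a0, ha0⟩ : ↥P) x)⁻¹ : ↥Q) : G) = ⁅(↑x : G), a0⁆ := by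
        show (↑x : G) * (a0 * ↑x * a0⁻¹)⁻¹ = ⁅(↑x : G), a0⁆
        rw [commutatorElement_def]
        group
      rwa [h3] at h2
    have hfmem : ∀ x : ↥Q, ⁅(↑x : G), a0⁆ ∈ Q := fun x => hQ'le (hcm x)
    let f : ↥Q →* ↥Q :=
      { toFun := fun x => ⟨⁅(↑x : G), a0⁆, hfmem x⟩
        map_one' := by
          apply Subtype.ext
          show ⁅(1 : G), a0⁆ = 1
          rw [commutatorElement_def]
          group
        map_mul' := by
          intro x y
          apply Subtype.ext
          show ⁅(↑x * ↑y : G), a0⁆ = ⁅(↑x : G), a0⁆ * ⁅(↑y : G), a0⁆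
          have hid : ⁅(↑x * ↑y : G), a0⁆ = ↑x * ⁅(↑y : G), a0⁆ * (↑x : G)⁻¹ * ⁅(↑x : G), a0⁆ := by
            simp only [commutatorElement_def]
            group
          rw [hid]
          have hc1 : (↑x : G) * ⁅(↑y : G), a0⁆ * (↑x : G)⁻¹ = ⁅(↑y : G), a0⁆ := by
            rw [(hcent (↑x) x.2 _ (hcm y)).eq]
            group
          rw [hc1]
          exact ((hcent _ (hfmem x) _ (hcm y)).eq).symm }
    have hfΦ : ∀ x : ↥Q, f (Φ x) = f x := by
      intro x
      apply Subtype.ext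
      show ⁅(g * ↑x * g⁻¹ : G), a0⁆ = ⁅(↑x : G), a0⁆
      have e1 : ⁅(g * ↑x * g⁻¹ : G), a0⁆ = g * ⁅(↑x : G), g⁻¹ * a0 * g⁆ * g⁻¹ := by
        simp only [commutatorElement_def]
        group
      have e2 : g⁻¹ * a0 * g = a0 := by
        have hc := (hgP a0 ha0).eq
        rw [mul_assoc, ← hc]
        group
      rw [e1, e2, (hgQ' _ (hcm x)).eq]
      group
    have hfΦn : ∀ (m : ℕ) (x : ↥Q), f ((Φ ^ m) x) = f x := by
      intro m
      induction m with
      | zero =>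
        intro x
        have h0 : (Φ ^ 0) x = x := by simp
        rw [h0]
      | succ m ih =>
        intro x
        rw [show (Φ ^ (m + 1)) x = Φ ((Φ ^ m) x) by rw [pow_succ']; rfl, hfΦ, ih]
    have hker : ∀ x : ↥Q, f x = 1 := by
      have hK : ⁅Q, Subgroup.zpowers g⁆ ≤ Subgroup.map Q.subtype f.ker := by
        rw [Subgroup.commutator_le]
        intro x1 hx1 y hy
        obtain ⟨m, rfl⟩ := mem_zpowers_nat hy
        refine ⟨(⟨x1, hx1⟩ : ↥Q) * ((Φ ^ m) ⟨x1, hx1⟩)⁻¹, ?_, ?_⟩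
        · show _ ∈ f.ker
          rw [MonoidHom.mem_ker, map_mul, map_inv, hfΦn m, mul_inv_cancel]
        · show ((⟨x1, hx1⟩ : ↥Q) : G) * (↑(((Φ ^ m) ⟨x1, hx1⟩)⁻¹ : ↥Q) : G) = ⁅x1, g ^ m⁆
          rw [show (↑(((Φ ^ m) ⟨x1, hx1⟩)⁻¹ : ↥Q) : G) = (↑(((Φ ^ m) ⟨x1, hx1⟩) : ↥Q) : G)⁻¹
            from rfl, hΦpow m ⟨x1, hx1⟩, commutatorElement_def]
          group
      intro x
      have hx : (↑x : G) ∈ Subgroup.map Q.subtype f.ker := by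
        apply hK
        rw [hQ1]
        exact x.2
      obtain ⟨x', hx', hxx⟩ := hx
      have hxe : x' = x := Subtype.ext hxx
      subst hxe
      exact hx'
    have h9 := hker ⟨q, hq⟩
    have h10 : ⁅q, a0⁆ = 1 := congrArg Subtype.val h9
    exact (commutatorElement_eq_one_iff_commute.mp h10).symm

theorem conj_mem_commutator {K L : Subgroup G} {a x : G}
    (hK : K.map (MulAut.conj a).toMonoidHom = K) (hL : L.map (MulAut.conj a).toMonoidHom = L)
    (hx : x ∈ ⁅K, L⁆) : a * x * a⁻¹ ∈ ⁅K, L⁆ := by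
  have h1 : a * x * a⁻¹ ∈ (⁅K, L⁆.map (MulAut.conj a).toMonoidHom) :=
    Subgroup.mem_map.mpr ⟨x, hx, by simp [MulAut.conj_apply]⟩
  rwa [Subgroup.map_commutator, hK, hL] at h1

theorem zpowersMap_eq {a g : G} (hc : Commute a g) :
    (Subgroup.zpowers g).map (MulAut.conj a).toMonoidHom = Subgroup.zpowers g := by
  rw [MonoidHom.map_zpowers]
  congr 1
  rw [MulEquiv.coe_toMonoidHom, MulAut.conj_apply]
  rw [hc.eq, mul_assoc, mul_inv_cancel, mul_one]

theorem card_lt_of_lt [Finite G] {H K : Subgroup G} (h : H < K) : Nat.card H < Nat.card K := by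
  have hss : (H : Set G) ⊂ (K : Set G) := by
    rw [Set.ssubset_iff_of_subset (SetLike.coe_subset_coe.mpr h.le)]
    obtain ⟨x, hxK, hxH⟩ := SetLike.exists_of_lt h
    exact ⟨x, hxK, hxH⟩
  have := Set.ncard_lt_ncard hss (K : Set G).toFinite
  simpa [← Nat.card_coe_set_eq] using this

theorem commute_of_commute_commutator [Finite G] {p : ℕ} [Fact p.Prime]
    {Q : Subgroup G} (hQ : IsPGroup p Q) {g : G} (hg : g ∈ (Subgroup.normalizer ((Q : Subgroup G) : Set G)))
    (hord : (orderOf g).Coprime p)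
    (hc : ∀ u ∈ ⁅Q, Subgroup.zpowers g⁆, Commute g u) :
    ∀ q ∈ Q, Commute g q := by
  intro q hq
  set d := q⁻¹ * (g⁻¹ * q * g) with hd
  have hdcomm : d = ⁅q⁻¹, g⁻¹⁆ := by
    show q⁻¹ * (g⁻¹ * q * g) = _
    rw [commutatorElement_def]; simp [mul_assoc]
  have hdmem : d ∈ ⁅Q, Subgroup.zpowers g⁆ := by
    rw [hdcomm]
    exact Subgroup.commutator_mem_commutator (Q.inv_mem hq)
      ((Subgroup.zpowers g).inv_mem (Subgroup.mem_zpowers g))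
  have hdQ : d ∈ Q := by
    have : g⁻¹ * q * g ∈ Q := by
      have hg' := (Subgroup.mem_normalizer_iff.mp ((Subgroup.normalizer ((Q : Subgroup G) : Set G)).inv_mem hg) q).mp hq
      simpa [mul_assoc] using hg'
    exact Q.mul_mem (Q.inv_mem hq) this
  have hgd : g⁻¹ * d * g = d := by
    have h1 := (hc d hdmem).eq
    calc g⁻¹ * d * g = g⁻¹ * (d * g) := by group
    _ = g⁻¹ * (g * d) := by rw [← h1]
    _ = d := by group
  have hdn : ∀ n : ℕ, g⁻¹ * d ^ n * g = d ^ n := by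
    intro n
    induction n with
    | zero => simp
    | succ m ihm =>
      have e1 : g⁻¹ * d ^ (m+1) * g = (g⁻¹ * d ^ m * g) * (g⁻¹ * d * g) := by
        rw [pow_succ]; group
      rw [e1, ihm, hgd, ← pow_succ]
  have key : ∀ n : ℕ, (g ^ n)⁻¹ * q * g ^ n = q * d ^ n := by
    intro n
    induction n with
    | zero => simp
    | succ n ih =>
      have e2 : (g ^ (n+1))⁻¹ * q * g ^ (n+1) = g⁻¹ * ((g ^ n)⁻¹ * q * g ^ n) * g := by
        rw [pow_succ]; group
      rw [e2, ih]
      have e3 : g⁻¹ * (q * d ^ n) * g = (g⁻¹ * q * g) * (g⁻¹ * d ^ n * g) := by group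
      rw [e3, hdn n]
      have e4 : g⁻¹ * q * g = q * d := by rw [hd]; group
      rw [e4, pow_succ]; group
  have hgn := key (orderOf g)
  rw [pow_orderOf_eq_one] at hgn
  simp only [inv_one, one_mul, mul_one] at hgn
  have hdn1 : d ^ orderOf g = 1 := by
    have := hgn.symm
    rwa [mul_eq_left] at this
  have hdvd : orderOf d ∣ orderOf g := orderOf_dvd_of_pow_eq_one hdn1
  obtain ⟨k, hk⟩ := IsPGroup.iff_orderOf.mp hQ ⟨d, hdQ⟩
  have hcoe := orderOf_injective Q.subtype Subtype.coe_injective (⟨d, hdQ⟩ : Q)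
  rw [show Q.subtype ⟨d, hdQ⟩ = d from rfl] at hcoe
  rw [← hcoe] at hk
  have : p ^ k ∣ orderOf g := hk ▸ hdvd
  have hcop : (orderOf g).Coprime (p ^ k) := hord.pow_right k
  have hpk1 : p ^ k = 1 := Nat.eq_one_of_dvd_coprimes hcop this dvd_rfl
  have hd1 : d = 1 := by
    have : orderOf d = 1 := by rw [hk, hpk1]
    exact orderOf_eq_one_iff.mp this
  have hq' : g⁻¹ * q * g = q := by
    rw [hd] at hd1
    have h2 : q * (q⁻¹ * (g⁻¹ * q * g)) = q * 1 := by rw [hd1]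
    simpa [mul_assoc] using h2
  have h3 : g * (g⁻¹ * q * g) = g * q := congrArg (fun y => g * y) hq'
  have h4 : g * (g⁻¹ * q * g) = q * g := by group
  rw [h4] at h3
  exact h3.symm

/-- **Thompson's P×Q lemma** (element form, inside an ambient finite group). -/
theorem thompson_pq [Finite G] {p : ℕ} [Fact p.Prime] :
    ∀ (n : ℕ) (Q P : Subgroup G), Nat.card Q ≤ n → IsPGroup p Q → IsPGroup p P →
      P ≤ (Subgroup.normalizer ((Q : Subgroup G) : Set G)) → ∀ g : G, g ∈ (Subgroup.normalizer ((Q : Subgroup G) : Set G)) → (orderOf g).Coprime p →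
      (∀ a ∈ P, Commute g a) → (∀ q ∈ Q, (∀ a ∈ P, Commute a q) → Commute g q) →
      ∀ q ∈ Q, Commute g q := by
  intro n
  induction n with
  | zero =>
    intro Q P hcard
    exact absurd hcard (by have : 0 < Nat.card Q := Nat.card_pos; omega)
  | succ n IHn =>
    intro Q P hcard hQ hP hPN g hg hord hgP hfix
    by_cases hbot : Q = ⊥
    · intro q hq
      rw [hbot, Subgroup.mem_bot] at hq
      subst hq
      exact Commute.one_right g
    -- a common helper for the sub-calls of the induction hypothesis
    have IH : ∀ W : Subgroup G, W < Q → P ≤ (Subgroup.normalizer ((W : Subgroup G) : Set G)) → g ∈ (Subgroup.normalizer ((W : Subgroup G) : Set G)) →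
        ∀ x ∈ W, Commute g x := by
      intro W hWlt hWP hWg
      have hcard' : Nat.card W ≤ n := by
        have := card_lt_of_lt hWlt
        omega
      exact IHn W P hcard' (hQ.to_le hWlt.le) hP hWP g hWg hord hgP
        (fun q hq h => hfix q (hWlt.le hq) h)
    have hQ1le : ⁅Q, Subgroup.zpowers g⁆ ≤ Q := by
      rw [Subgroup.commutator_le]
      intro x hx y hy
      have hyN : y ∈ (Subgroup.normalizer ((Q : Subgroup G) : Set G)) := Subgroup.zpowers_le.mpr hg hy
      have h1 : y * x⁻¹ * y⁻¹ ∈ Q :=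
        (Subgroup.mem_normalizer_iff.mp hyN x⁻¹).mp (Q.inv_mem hx)
      have h2 : ⁅x, y⁆ = x * (y * x⁻¹ * y⁻¹) := by rw [commutatorElement_def]; group
      rw [h2]
      exact Q.mul_mem hx h1
    rcases lt_or_eq_of_le hQ1le with hQ1lt | hQ1
    · -- Case 1: the commutator is a proper subgroup
      have hPN1 : P ≤ (Subgroup.normalizer ((⁅Q, Subgroup.zpowers g⁆ : Subgroup G) : Set G)) := by
        intro a ha
        apply mem_normalizer_of_conj
        · intro x hx
          exact conj_mem_commutator (conjMap_eq (hPN ha)) (zpowersMap_eq (hgP a ha).symm) hx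
        · intro x hx
          have h3 := conj_mem_commutator (conjMap_eq ((Subgroup.normalizer ((Q : Subgroup G) : Set G)).inv_mem (hPN ha)))
            (zpowersMap_eq (hgP a ha).symm.inv_left) hx
          simpa using h3
      have hgN1 : g ∈ (Subgroup.normalizer ((⁅Q, Subgroup.zpowers g⁆ : Subgroup G) : Set G)) := by
        apply mem_normalizer_of_conj
        · intro x hx
          exact conj_mem_commutator (conjMap_eq hg) (zpowersMap_eq (Commute.refl g)) hx
        · intro x hx
          have h3 := conj_mem_commutator (conjMap_eq ((Subgroup.normalizer ((Q : Subgroup G) : Set G)).inv_mem hg))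
            (zpowersMap_eq (Commute.refl g).inv_left) hx
          simpa using h3
      have hcent1 := IH _ hQ1lt hPN1 hgN1
      exact commute_of_commute_commutator hQ hg hord hcent1
    · -- Case 2
      exact thompson_case2 Q P hQ hP hPN g hg hgP hfix hbot hQ1 IH

theorem isPGroup_subgroupOf {G : Type*} [Group G] {p : ℕ} {P K : Subgroup G}
    (hP : IsPGroup p ↥P) : IsPGroup p ↥(P.subgroupOf K) := by
  intro x
  obtain ⟨k, hk⟩ := hP ⟨((x : ↥K) : G), Subgroup.mem_subgroupOf.mp x.2⟩
  refine ⟨k, ?_⟩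
  have h1 : (((x : ↥K) : G)) ^ p ^ k = 1 := by
    have h2 := congrArg (fun z : ↥P => (z : G)) hk
    push_cast at h2
    exact h2
  apply Subtype.ext
  apply Subtype.ext
  push_cast
  exact h1

theorem centralizer_normal {G : Type*} [Group G] {R : Subgroup G} (hR : R.Normal) :
    (Subgroup.centralizer (R : Set G)).Normal := by
  constructor
  intro n hn gg
  rw [Subgroup.mem_centralizer_iff] at hn ⊢
  intro r hr
  have h1 : gg⁻¹ * r * gg ∈ R := by
    have h2 := hR.conj_mem r hr gg⁻¹
    simpa using h2
  have h2 := hn _ h1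
  calc r * (gg * n * gg⁻¹) = gg * ((gg⁻¹ * r * gg) * n) * gg⁻¹ := by group
  _ = gg * (n * (gg⁻¹ * r * gg)) * gg⁻¹ := by rw [h2]
  _ = (gg * n * gg⁻¹) * r := by group

open Pointwise

theorem exists_pcore (p : ℕ) [Fact p.Prime] {G : Type*} [Group G] [Finite G] :
    ∃ Qc : Subgroup G, IsPCore p Qc := by
  classical
  refine ⟨⨅ S : Sylow p G, ↑S, ?_, ?_, ?_⟩
  · constructor
    intro x hx gg
    rw [Subgroup.mem_iInf]
    intro S
    have h1 : x ∈ ((gg⁻¹ • S : Sylow p G) : Subgroup G) := (Subgroup.mem_iInf.mp hx) _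
    rw [Sylow.coe_subgroup_smul, Subgroup.mem_pointwise_smul_iff_inv_smul_mem] at h1
    rw [← map_inv, inv_inv] at h1
    rwa [MulAut.smul_def, MulAut.conj_apply] at h1
  · obtain ⟨S0⟩ : Nonempty (Sylow p G) := inferInstance
    exact S0.2.to_le (iInf_le _ S0)
  · intro N hN hNp
    apply le_iInf
    intro S
    obtain ⟨S1, hS1⟩ := hNp.exists_le_sylow
    obtain ⟨gg, hgg⟩ := MulAction.exists_smul_eq G S1 S
    intro x hx
    have h1 : gg⁻¹ * x * (gg⁻¹)⁻¹ ∈ N := hN.conj_mem x hx gg⁻¹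
    have h2 : gg⁻¹ * x * gg ∈ (S1 : Subgroup G) := by
      rw [inv_inv] at h1
      exact hS1 h1
    rw [← hgg]
    show x ∈ ((gg • S1 : Sylow p G) : Subgroup G)
    rw [Sylow.coe_subgroup_smul, Subgroup.mem_pointwise_smul_iff_inv_smul_mem]
    rw [← map_inv, MulAut.smul_def, MulAut.conj_apply]
    simpa using h2

end ThompsonAux

open Subgroup

/-- If a finite group `G` has characteristic `p` (i.e. `C_G(O_p(G)) ≤ O_p(G)`), then
for every nontrivial `p`-subgroup `P` of `G` the normalizer `N_G(P)` again has
characteristic `p`. -/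
theorem normalizer_char_p_of_char_p
    {G : Type*} [Group G] [Finite G] {p : ℕ} [Fact p.Prime]
    (hchar : ∀ P0 : Subgroup G, IsPCore p P0 → Subgroup.centralizer (P0 : Set G) ≤ P0)
    (P : Subgroup G) (hP : IsPGroup p ↥P) (hPne : P ≠ ⊥) :
    ∀ R : Subgroup ↥(Subgroup.normalizer (P : Set G)), IsPCore p R →
      Subgroup.centralizer (R : Set ↥(Subgroup.normalizer (P : Set G))) ≤ R := by
  intro R hR
  obtain ⟨hRnorm, hRpg, hRmax⟩ := hR
  obtain ⟨Qc, hQcN, hQcP, hQcM⟩ := ThompsonAux.exists_pcore p (G := G)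
  have hQcNorm : (Subgroup.normalizer ((Qc : Subgroup G) : Set G)) = ⊤ := Subgroup.normalizer_eq_top_iff.mpr hQcN
  -- P, viewed inside its normalizer, is contained in R
  have hPsub : P.subgroupOf (Subgroup.normalizer ((P : Subgroup G) : Set G)) ≤ R :=
    hRmax _ Subgroup.normal_in_normalizer (ThompsonAux.isPGroup_subgroupOf hP)
  -- Qc ∩ N, viewed inside the normalizer, is contained in R
  have hQsub : Qc.subgroupOf (Subgroup.normalizer ((P : Subgroup G) : Set G)) ≤ R :=
    hRmax _ (hQcN.subgroupOf _) (ThompsonAux.isPGroup_subgroupOf hQcP)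
  -- the centralizer of R is a normal p-subgroup, hence contained in R
  suffices hCp : IsPGroup p ↥(Subgroup.centralizer (R : Set ↥(Subgroup.normalizer ((P : Subgroup G) : Set G)))) by
    exact hRmax _ (ThompsonAux.centralizer_normal hRnorm) hCp
  intro c
  set y : ↥(Subgroup.normalizer ((P : Subgroup G) : Set G)) := (c : ↥(Subgroup.normalizer ((P : Subgroup G) : Set G))) with hy
  have hyC : y ∈ Subgroup.centralizer (R : Set ↥(Subgroup.normalizer ((P : Subgroup G) : Set G))) := c.2
  have hnn : orderOf y ≠ 0 := (isOfFinOrder_of_finite y).orderOf_pos.ne'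
  set k := (orderOf y).factorization p with hkdef
  set z := y ^ (p ^ k) with hz
  have hzC : z ∈ Subgroup.centralizer (R : Set ↥(Subgroup.normalizer ((P : Subgroup G) : Set G))) :=
    Subgroup.pow_mem _ hyC _
  have hordz : orderOf z = orderOf y / p ^ k := by
    rw [hz, orderOf_pow, Nat.gcd_eq_right (Nat.ordProj_dvd _ _)]
  have hcop : (orderOf z).Coprime p := by
    rw [hordz]
    exact (Nat.coprime_ordCompl (Fact.out : p.Prime) hnn).symm
  -- apply Thompson's P×Q lemma to the element ↑z and the p-core Qc
  have hcomm_all : ∀ q ∈ Qc, Commute ((z : ↥(Subgroup.normalizer ((P : Subgroup G) : Set G))) : G) q := by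
    apply ThompsonAux.thompson_pq (Nat.card Qc) Qc P le_rfl hQcP hP
      (by rw [hQcNorm]; exact le_top) _ (by rw [hQcNorm]; trivial)
    · -- coprime order
      show (orderOf ((Subgroup.normalizer ((P : Subgroup G) : Set G)).subtype z)).Coprime p
      rw [orderOf_injective (Subgroup.normalizer ((P : Subgroup G) : Set G)).subtype Subtype.coe_injective z]
      exact hcop
    · -- commutes with P
      intro a ha
      have haN : a ∈ (Subgroup.normalizer ((P : Subgroup G) : Set G)) := Subgroup.le_normalizer ha
      have haR : (⟨a, haN⟩ : ↥(Subgroup.normalizer ((P : Subgroup G) : Set G))) ∈ R :=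
        hPsub (Subgroup.mem_subgroupOf.mpr ha)
      have h3 := Subgroup.mem_centralizer_iff.mp hzC _ haR
      -- h3 : ⟨a⟩ * z = z * ⟨a⟩ in the normalizer
      have h4 := congrArg (fun t : ↥(Subgroup.normalizer ((P : Subgroup G) : Set G)) => (t : G)) h3
      push_cast at h4
      exact h4.symm
    · -- the fixed-point hypothesis
      intro q hq hcomm
      have hqN : q ∈ (Subgroup.normalizer ((P : Subgroup G) : Set G)) := by
        rw [Subgroup.mem_normalizer_iff]
        intro t
        constructor
        · intro ht
          have h5 := (hcomm t ht).eq
          have h6 : q * t * q⁻¹ = t := by rw [← h5]; group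
          rw [h6]
          exact ht
        · intro ht
          have h5 := (hcomm _ ht).eq
          have h6 : q * t * q⁻¹ = t := by
            have h7 : (q * t * q⁻¹) * q = q * (q * t * q⁻¹) := h5
            have h8 : q * t = q * (q * t * q⁻¹) := by
              calc q * t = (q * t * q⁻¹) * q := by group
              _ = q * (q * t * q⁻¹) := h5
            have := mul_left_cancel h8
            rw [← this]
          rw [← h6]
          exact ht
      have hqR : (⟨q, hqN⟩ : ↥(Subgroup.normalizer ((P : Subgroup G) : Set G))) ∈ R :=
        hQsub (Subgroup.mem_subgroupOf.mpr hq)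
      have h3 := Subgroup.mem_centralizer_iff.mp hzC _ hqR
      have h4 := congrArg (fun t : ↥(Subgroup.normalizer ((P : Subgroup G) : Set G)) => (t : G)) h3
      push_cast at h4
      exact h4.symm
  -- hence ↑z lies in the centralizer of Qc, hence in Qc, hence is trivial
  have hzQc : ((z : ↥(Subgroup.normalizer ((P : Subgroup G) : Set G))) : G) ∈ Qc := by
    apply hchar Qc ⟨hQcN, hQcP, hQcM⟩
    rw [Subgroup.mem_centralizer_iff]
    intro q hq
    exact (hcomm_all q hq).symm
  obtain ⟨j, hj⟩ := hQcP ⟨_, hzQc⟩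
  have hj1 : ((z : ↥(Subgroup.normalizer ((P : Subgroup G) : Set G))) : G) ^ p ^ j = 1 := by
    have h2 := congrArg (fun t : ↥Qc => (t : G)) hj
    push_cast at h2
    exact h2
  have hdvd : orderOf z ∣ p ^ j := by
    have h2 : orderOf ((Subgroup.normalizer ((P : Subgroup G) : Set G)).subtype z) ∣ p ^ j := orderOf_dvd_of_pow_eq_one hj1
    rwa [orderOf_injective (Subgroup.normalizer ((P : Subgroup G) : Set G)).subtype Subtype.coe_injective z] at h2
  have hz1 : z = 1 := by
    have h2 : orderOf z = 1 :=
      Nat.eq_one_of_dvd_coprimes (hcop.pow_right j) dvd_rfl hdvd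
    exact orderOf_eq_one_iff.mp h2
  refine ⟨k, ?_⟩
  apply Subtype.ext
  push_cast
  rw [← hz]  -- goal becomes z = 1 at normalizer level? adjust
  exact_mod_cast congrArg (fun t : ↥(Subgroup.normalizer ((P : Subgroup G) : Set G)) => (t : G)) hz1
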